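/- Let k be a field of characteristic different from 2 and let φ be a happy normalized 3-cocycle on C₂×C₂ with coefficients in k*. Set a = φ(τ,σ,σ), b = φ(σ,τ,σ), ε_x = φ(x,x,x) for x ∈ {σ,τ,ρ}, and p = ε_σ·ε_τ·ε_ρ. Then φ is completely determined by ε_σ, ε_τ, ε_ρ, a, b; explicitly: φ(σ,τ,τ)=p·a, φ(τ,τ,σ)=p·a⁻¹, φ(σ,σ,τ)=a⁻¹, φ(ρ,σ,σ)=ε_σ·a, φ(σ,ρ,ρ)=p·ε_σ·a, φ(σ,σ,ρ)=ε_σ·a⁻¹, φ(ρ,ρ,σ)=p·ε_σ·a⁻¹, φ(ρ,τ,τ)=p·ε_τ·a, φ(τ,ρ,ρ)=ε_τ·a, φ(τ,τ,ρ)=p·ε_τ·a⁻¹, φ(ρ,ρ,τ)=ε_τ·a⁻¹, φ(ρ,σ,ρ)=p·ε_σ·b, φ(τ,ρ,τ)=p·ε_τ·b, φ(τ,σ,τ)=p·b⁻¹, φ(σ,ρ,σ)=ε_σ·b⁻¹, φ(ρ,τ,ρ)=ε_τ·b⁻¹. -/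

import Mathlib

def IsCocycle {k : Type*} [Field k] {G : Type*} [Group G] (φ : G → G → G → kˣ) : Prop :=
  ∀ x y z t : G, φ y z t * φ x (y * z) t * φ x y z = φ (x * y) z t * φ x y (z * t)

def IsNormalized {k : Type*} [Field k] {G : Type*} [Group G] (φ : G → G → G → kˣ) : Prop :=
  ∀ x z : G, φ x 1 z = 1

def d2 {k : Type*} [Field k] {G : Type*} [Group G] (g : G → G → kˣ) : G → G → G → kˣ :=
  fun x y z => g y z * (g (x * y) z)⁻¹ * g x (y * z) * (g x y)⁻¹

def IsCoboundary {k : Type*} [Field k] {G : Type*} [Group G] (φ : G → G → G → kˣ) : Prop :=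
  ∃ g : G → G → kˣ, φ = d2 g

/-- The Klein four-group `C₂ × C₂`, written multiplicatively. -/
abbrev K : Type := Multiplicative (ZMod 2 × ZMod 2)

def σ : K := Multiplicative.ofAdd (1, 0)
def τ : K := Multiplicative.ofAdd (0, 1)
def ρ : K := Multiplicative.ofAdd (1, 1)

/-- A normalized 3-cocycle on the Klein group is happy if it takes the value
`p = ε_σ · ε_τ · ε_ρ` on each permutation of `(σ, τ, ρ)`. -/
def IsHappy {k : Type*} [Field k] (φ : K → K → K → kˣ) : Prop :=
  ∀ x y z : K, List.Perm [x, y, z] [σ, τ, ρ] →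
    φ x y z = φ σ σ σ * φ τ τ τ * φ ρ ρ ρ

theorem statement8 {k : Type*} [Field k] (hk : ringChar k ≠ 2)
    (φ : K → K → K → kˣ) (hc : IsCocycle φ) (hn : IsNormalized φ) (hh : IsHappy φ)
    (a b εσ ετ ερ p : kˣ)
    (ha : a = φ τ σ σ) (hb : b = φ σ τ σ)
    (hεσ : εσ = φ σ σ σ) (hετ : ετ = φ τ τ τ) (hερ : ερ = φ ρ ρ ρ)
    (hp : p = εσ * ετ * ερ) :
    φ σ τ τ = p * a ∧
    φ τ τ σ = p * a⁻¹ ∧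
    φ σ σ τ = a⁻¹ ∧
    φ ρ σ σ = εσ * a ∧
    φ σ ρ ρ = p * εσ * a ∧
    φ σ σ ρ = εσ * a⁻¹ ∧
    φ ρ ρ σ = p * εσ * a⁻¹ ∧
    φ ρ τ τ = p * ετ * a ∧
    φ τ ρ ρ = ετ * a ∧
    φ τ τ ρ = p * ετ * a⁻¹ ∧
    φ ρ ρ τ = ετ * a⁻¹ ∧
    φ ρ σ ρ = p * εσ * b ∧
    φ τ ρ τ = p * ετ * b ∧
    φ τ σ τ = p * b⁻¹ ∧
    φ σ ρ σ = εσ * b⁻¹ ∧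
    φ ρ τ ρ = ετ * b⁻¹ := by
  have hc' : ∀ x y z t : K, φ y z t * φ x (y * z) t * φ x y z = φ (x * y) z t * φ x y (z * t) := hc
  have hn' : ∀ x z : K, φ x 1 z = 1 := hn
  have mulc : ∀ {u v w x : kˣ}, u = v → w = x → u * w = v * x := fun h1 h2 => by rw [h1, h2]
  have h11 : ∀ z : K, φ 1 1 z = 1 := fun z => by simpa only [mul_one, one_mul, hn'] using hc' σ 1 1 z
  have hL : ∀ y z : K, φ 1 y z = 1 := fun y z => by
    have e := hc' 1 1 y z
    simp only [one_mul, mul_one, h11] at e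
    exact mul_eq_left.mp e
  have hR : ∀ x y : K, φ x y 1 = 1 := fun x y => by
    have e := hc' x y 1 1
    simp only [one_mul, mul_one, hn'] at e
    exact mul_eq_left.mp e
  have kσσ : σ * σ = 1 := by decide
  have kστ : σ * τ = ρ := by decide
  have kσρ : σ * ρ = τ := by decide
  have kτσ : τ * σ = ρ := by decide
  have kττ : τ * τ = 1 := by decide
  have kτρ : τ * ρ = σ := by decide
  have kρσ : ρ * σ = τ := by decide
  have kρτ : ρ * τ = σ := by decide
  have kρρ : ρ * ρ = 1 := by decide
  have Etttt : φ τ τ τ * φ τ τ τ = 1 := by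
    simpa only [kσσ, kστ, kσρ, kτσ, kττ, kτρ, kρσ, kρτ, kρρ, hn', hL, hR, one_mul, mul_one] using hc' τ τ τ τ
  have Ettts : φ τ τ σ * φ τ τ τ = φ τ τ ρ := by
    simpa only [kσσ, kστ, kσρ, kτσ, kττ, kτρ, kρσ, kρτ, kρρ, hn', hL, hR, one_mul, mul_one] using hc' τ τ τ σ
  have Ettss : φ τ σ σ * φ τ ρ σ * φ τ τ σ = 1 := by
    simpa only [kσσ, kστ, kσρ, kτσ, kττ, kτρ, kρσ, kρτ, kρρ, hn', hL, hR, one_mul, mul_one] using hc' τ τ σ σ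
  have Ettsr : φ τ σ ρ * φ τ ρ ρ * φ τ τ σ = φ τ τ τ := by
    simpa only [kσσ, kστ, kσρ, kτσ, kττ, kτρ, kρσ, kρτ, kρρ, hn', hL, hR, one_mul, mul_one] using hc' τ τ σ ρ
  have Ettrt : φ τ ρ τ * φ τ σ τ * φ τ τ ρ = φ τ τ σ := by
    simpa only [kσσ, kστ, kσρ, kτσ, kττ, kτρ, kρσ, kρτ, kρρ, hn', hL, hR, one_mul, mul_one] using hc' τ τ ρ τ
  have Etsst : φ σ σ τ * φ τ σ σ = φ ρ σ τ * φ τ σ ρ := by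
    simpa only [kσσ, kστ, kσρ, kτσ, kττ, kτρ, kρσ, kρτ, kρρ, hn', hL, hR, one_mul, mul_one] using hc' τ σ σ τ
  have Etsss : φ σ σ σ * φ τ σ σ = φ ρ σ σ := by
    simpa only [kσσ, kστ, kσρ, kτσ, kττ, kτρ, kρσ, kρτ, kρρ, hn', hL, hR, one_mul, mul_one] using hc' τ σ σ σ
  have Etsrt : φ σ ρ τ * φ τ τ τ * φ τ σ ρ = φ ρ ρ τ * φ τ σ σ := by
    simpa only [kσσ, kστ, kσρ, kτσ, kττ, kτρ, kρσ, kρτ, kρρ, hn', hL, hR, one_mul, mul_one] using hc' τ σ ρ τ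
  have Etrtr : φ ρ τ ρ * φ τ σ ρ * φ τ ρ τ = φ σ τ ρ * φ τ ρ σ := by
    simpa only [kσσ, kστ, kσρ, kτσ, kττ, kτρ, kρσ, kρτ, kρρ, hn', hL, hR, one_mul, mul_one] using hc' τ ρ τ ρ
  have Etrrr : φ ρ ρ ρ * φ τ ρ ρ = φ σ ρ ρ := by
    simpa only [kσσ, kστ, kσρ, kτσ, kττ, kτρ, kρσ, kρτ, kρρ, hn', hL, hR, one_mul, mul_one] using hc' τ ρ ρ ρ
  have Estst : φ τ σ τ * φ σ ρ τ * φ σ τ σ = φ ρ σ τ * φ σ τ ρ := by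
    simpa only [kσσ, kστ, kσρ, kτσ, kττ, kτρ, kρσ, kρτ, kρρ, hn', hL, hR, one_mul, mul_one] using hc' σ τ σ τ
  have Essss : φ σ σ σ * φ σ σ σ = 1 := by
    simpa only [kσσ, kστ, kσρ, kτσ, kττ, kτρ, kρσ, kρτ, kρρ, hn', hL, hR, one_mul, mul_one] using hc' σ σ σ σ
  have Erstt : φ σ τ τ * φ ρ ρ τ * φ ρ σ τ = φ τ τ τ := by
    simpa only [kσσ, kστ, kσρ, kτσ, kττ, kτρ, kρσ, kρτ, kρρ, hn', hL, hR, one_mul, mul_one] using hc' ρ σ τ τ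
  have Ersts : φ σ τ σ * φ ρ ρ σ * φ ρ σ τ = φ τ τ σ * φ ρ σ ρ := by
    simpa only [kσσ, kστ, kσρ, kτσ, kττ, kτρ, kρσ, kρτ, kρρ, hn', hL, hR, one_mul, mul_one] using hc' ρ σ τ σ
  have Ersst : φ σ σ τ * φ ρ σ σ = φ τ σ τ * φ ρ σ ρ := by
    simpa only [kσσ, kστ, kσρ, kτσ, kττ, kτρ, kρσ, kρτ, kρρ, hn', hL, hR, one_mul, mul_one] using hc' ρ σ σ τ
  have Erssr : φ σ σ ρ * φ ρ σ σ = φ τ σ ρ * φ ρ σ τ := by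
    simpa only [kσσ, kστ, kσρ, kτσ, kττ, kτρ, kρσ, kρτ, kρρ, hn', hL, hR, one_mul, mul_one] using hc' ρ σ σ ρ
  have Ersrt : φ σ ρ τ * φ ρ τ τ * φ ρ σ ρ = φ τ ρ τ * φ ρ σ σ := by
    simpa only [kσσ, kστ, kσρ, kτσ, kττ, kτρ, kρσ, kρτ, kρρ, hn', hL, hR, one_mul, mul_one] using hc' ρ σ ρ τ
  have Ersrs : φ σ ρ σ * φ ρ τ σ * φ ρ σ ρ = φ τ ρ σ * φ ρ σ τ := by
    simpa only [kσσ, kστ, kσρ, kτσ, kττ, kτρ, kρσ, kρτ, kρρ, hn', hL, hR, one_mul, mul_one] using hc' ρ σ ρ σ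
  have Errrr : φ ρ ρ ρ * φ ρ ρ ρ = 1 := by
    simpa only [kσσ, kστ, kσρ, kτσ, kττ, kτρ, kρσ, kρτ, kρρ, hn', hL, hR, one_mul, mul_one] using hc' ρ ρ ρ ρ
  have Pstr : φ σ τ ρ = εσ * ετ * ερ := by
    rw [hh σ τ ρ (by decide), ← hεσ, ← hετ, ← hερ]
  have Psrt : φ σ ρ τ = εσ * ετ * ερ := by
    rw [hh σ ρ τ (by decide), ← hεσ, ← hετ, ← hερ]
  have Ptsr : φ τ σ ρ = εσ * ετ * ερ := by
    rw [hh τ σ ρ (by decide), ← hεσ, ← hετ, ← hερ]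
  have Ptrs : φ τ ρ σ = εσ * ετ * ερ := by
    rw [hh τ ρ σ (by decide), ← hεσ, ← hετ, ← hερ]
  have Prst : φ ρ σ τ = εσ * ετ * ερ := by
    rw [hh ρ σ τ (by decide), ← hεσ, ← hετ, ← hερ]
  have Prts : φ ρ τ σ = εσ * ετ * ερ := by
    rw [hh ρ τ σ (by decide), ← hεσ, ← hετ, ← hερ]
  have Zs : εσ * εσ = 1 := by rw [hεσ]; exact Essss
  have Zt : ετ * ετ = 1 := by rw [hετ]; exact Etttt
  have Zr : ερ * ερ = 1 := by rw [hερ]; exact Errrr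
  have Ktst : φ τ σ τ * b = p := by
    have H := (mulc (mulc (mulc (mulc (mulc (hb) ((hp).symm)) (Estst)) (Prst)) ((Psrt).symm)) (Pstr))
    have key : (φ τ σ τ * b) * ((φ σ τ σ) * (p) * (φ ρ σ τ * φ σ τ ρ) * (εσ * ετ * ερ) * (φ σ ρ τ) * (εσ * ετ * ερ)) = (p) * ((b) * (εσ * ετ * ερ) * (φ τ σ τ * φ σ ρ τ * φ σ τ σ) * (φ ρ σ τ) * (εσ * ετ * ερ) * (φ σ τ ρ)) := by ac_rfl
    exact mul_right_cancel (key.trans (congrArg (HMul.hMul ((p))) H))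
  have Krss : φ ρ σ σ = εσ * a := by
    have H := (mulc (mulc (ha.symm) (hεσ.symm)) ((Etsss).symm))
    have key : (φ ρ σ σ) * ((a) * (εσ) * (φ σ σ σ * φ τ σ σ)) = (εσ * a) * ((φ τ σ σ) * (φ σ σ σ) * (φ ρ σ σ)) := by ac_rfl
    exact mul_right_cancel (key.trans (congrArg (HMul.hMul ((εσ * a))) H))
  have Ksst : φ σ σ τ * a = 1 := by
    have H := (mulc (mulc (mulc (mulc (mulc (mulc (ha) (Etsst)) (Prst)) (Ptsr)) (Zr)) (Zs)) (Zt))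
    have key : (φ σ σ τ * a) * ((φ τ σ σ) * (φ ρ σ τ * φ τ σ ρ) * (εσ * ετ * ερ) * (εσ * ετ * ερ) * (1) * (1) * (1)) = (1 * 1 * 1) * ((a) * (φ σ σ τ * φ τ σ σ) * (φ ρ σ τ) * (φ τ σ ρ) * (ερ * ερ) * (εσ * εσ) * (ετ * ετ)) := by ac_rfl
    have res := mul_right_cancel (key.trans (congrArg (HMul.hMul ((1 * 1 * 1))) H))
    simpa only [mul_one] using res
  have Krrt : φ ρ ρ τ * a = ετ := by
    have H := (mulc (mulc (mulc (mulc (mulc (mulc (mulc ((hετ).symm) (ha)) ((Etsrt).symm)) (Psrt)) (Ptsr)) (Zr)) (Zs)) (Zt))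
    have key : (φ ρ ρ τ * a) * ((ετ) * (φ τ σ σ) * (φ σ ρ τ * φ τ τ τ * φ τ σ ρ) * (εσ * ετ * ερ) * (εσ * ετ * ερ) * (1) * (1) * (1)) = (ετ * 1 * 1 * 1) * ((φ τ τ τ) * (a) * (φ ρ ρ τ * φ τ σ σ) * (φ σ ρ τ) * (φ τ σ ρ) * (ερ * ερ) * (εσ * εσ) * (ετ * ετ)) := by ac_rfl
    have res := mul_right_cancel (key.trans (congrArg (HMul.hMul ((ετ * 1 * 1 * 1))) H))
    simpa only [mul_one] using res
  have Ktts : φ τ τ σ * a = p := by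
    have H := (mulc (mulc (mulc (mulc (mulc (mulc (ha) ((hp).symm)) (Ettss)) ((Ptrs).symm)) ((Zr).symm)) ((Zs).symm)) ((Zt).symm))
    have key : (φ τ τ σ * a * 1 * 1) * ((φ τ σ σ) * (p) * (1) * (φ τ ρ σ) * (ερ * ερ) * (εσ * εσ) * (ετ * ετ)) = (p) * ((a) * (εσ * ετ * ερ) * (φ τ σ σ * φ τ ρ σ * φ τ τ σ) * (εσ * ετ * ερ) * (1) * (1) * (1)) := by ac_rfl
    have res := mul_right_cancel (key.trans (congrArg (HMul.hMul ((p))) H))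
    simpa only [mul_one] using res
  have Ktrr : φ τ ρ ρ = ετ * a := by
    have H := (mulc (mulc (mulc (mulc (mulc (mulc (mulc ((hετ).symm) ((hp).symm)) (Ettsr)) ((Ktts).symm)) ((Ptsr).symm)) ((Zr).symm)) ((Zs).symm)) ((Zt).symm))
    have key : (φ τ ρ ρ * 1 * 1 * 1) * ((ετ) * (p) * (φ τ τ τ) * (φ τ τ σ * a) * (φ τ σ ρ) * (ερ * ερ) * (εσ * εσ) * (ετ * ετ)) = (ετ * a) * ((φ τ τ τ) * (εσ * ετ * ερ) * (φ τ σ ρ * φ τ ρ ρ * φ τ τ σ) * (p) * (εσ * ετ * ερ) * (1) * (1) * (1)) := by ac_rfl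
    have res := mul_right_cancel (key.trans (congrArg (HMul.hMul ((ετ * a))) H))
    simpa only [mul_one] using res
  have Kttr : φ τ τ ρ * a = p * ετ := by
    have H := (mulc (mulc (hετ.symm) ((Ettts).symm)) (Ktts))
    have key : (φ τ τ ρ * a) * ((ετ) * (φ τ τ σ * φ τ τ τ) * (p)) = (p * ετ) * ((φ τ τ τ) * (φ τ τ ρ) * (φ τ τ σ * a)) := by ac_rfl
    exact mul_right_cancel (key.trans (congrArg (HMul.hMul ((p * ετ))) H))
  have Ktrt : φ τ ρ τ = p * ετ * b := by
    have H := (mulc (mulc (mulc (mulc (mulc (mulc (mulc (mulc (mulc ((hp).symm) ((hp).symm)) (Ettrt)) ((Ktst).symm)) ((Kttr).symm)) (Ktts)) ((Zr).symm)) ((Zs).symm)) ((Zt).symm)) ((Zt).symm))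
    have key : (φ τ ρ τ * 1 * 1 * 1 * 1) * ((p) * (p) * (φ τ τ σ) * (φ τ σ τ * b) * (φ τ τ ρ * a) * (p) * (ερ * ερ) * (εσ * εσ) * (ετ * ετ) * (ετ * ετ)) = (p * ετ * b) * ((εσ * ετ * ερ) * (εσ * ετ * ερ) * (φ τ ρ τ * φ τ σ τ * φ τ τ ρ) * (p) * (p * ετ) * (φ τ τ σ * a) * (1) * (1) * (1) * (1)) := by ac_rfl
    have res := mul_right_cancel (key.trans (congrArg (HMul.hMul ((p * ετ * b))) H))
    simpa only [mul_one] using res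
  have Krtr : φ ρ τ ρ * b = ετ := by
    have H := (mulc (mulc (mulc (mulc (mulc (mulc ((hp).symm) (Etrtr)) ((Ktrt).symm)) (Pstr)) (Ptrs)) ((Ptsr).symm)) ((Zt).symm))
    have key : (φ ρ τ ρ * b * 1) * ((p) * (φ σ τ ρ * φ τ ρ σ) * (φ τ ρ τ) * (εσ * ετ * ερ) * (εσ * ετ * ερ) * (φ τ σ ρ) * (ετ * ετ)) = (ετ) * ((εσ * ετ * ερ) * (φ ρ τ ρ * φ τ σ ρ * φ τ ρ τ) * (p * ετ * b) * (φ σ τ ρ) * (φ τ ρ σ) * (εσ * ετ * ερ) * (1)) := by ac_rfl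
    have res := mul_right_cancel (key.trans (congrArg (HMul.hMul ((ετ))) H))
    simpa only [mul_one] using res
  have Ksrr : φ σ ρ ρ = p * εσ * a := by
    have H := (mulc (mulc (mulc (mulc ((hερ).symm) ((hp).symm)) ((Etrrr).symm)) (Ktrr)) ((Zs).symm))
    have key : (φ σ ρ ρ * 1) * ((ερ) * (p) * (φ ρ ρ ρ * φ τ ρ ρ) * (ετ * a) * (εσ * εσ)) = (p * εσ * a) * ((φ ρ ρ ρ) * (εσ * ετ * ερ) * (φ σ ρ ρ) * (φ τ ρ ρ) * (1)) := by ac_rfl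
    have res := mul_right_cancel (key.trans (congrArg (HMul.hMul ((p * εσ * a))) H))
    simpa only [mul_one] using res
  have Krsr : φ ρ σ ρ = p * εσ * b := by
    have H := (mulc (mulc (mulc (mulc (mulc (mulc (mulc (mulc ((hp).symm) ((hp).symm)) ((Ersst).symm)) (Krss)) (Ksst)) ((Ktst).symm)) ((Zr).symm)) ((Zs).symm)) ((Zt).symm))
    have key : (φ ρ σ ρ * 1 * 1) * ((p) * (p) * (φ σ σ τ * φ ρ σ σ) * (εσ * a) * (1) * (φ τ σ τ * b) * (ερ * ερ) * (εσ * εσ) * (ετ * ετ)) = (p * εσ * b) * ((εσ * ετ * ερ) * (εσ * ετ * ερ) * (φ τ σ τ * φ ρ σ ρ) * (φ ρ σ σ) * (φ σ σ τ * a) * (p) * (1) * (1) * (1)) := by ac_rfl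
    have res := mul_right_cancel (key.trans (congrArg (HMul.hMul ((p * εσ * b))) H))
    simpa only [mul_one] using res
  have Kssr : φ σ σ ρ * a = εσ := by
    have H := (mulc (mulc (mulc (mulc (mulc (Erssr) ((Krss).symm)) (Prst)) (Ptsr)) (Zr)) (Zt))
    have key : (φ σ σ ρ * a) * ((φ τ σ ρ * φ ρ σ τ) * (φ ρ σ σ) * (εσ * ετ * ερ) * (εσ * ετ * ερ) * (1) * (1)) = (εσ * 1 * 1) * ((φ σ σ ρ * φ ρ σ σ) * (εσ * a) * (φ ρ σ τ) * (φ τ σ ρ) * (ερ * ερ) * (ετ * ετ)) := by ac_rfl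
    have res := mul_right_cancel (key.trans (congrArg (HMul.hMul ((εσ * 1 * 1))) H))
    simpa only [mul_one] using res
  have Krrs : φ ρ ρ σ * a = p * εσ := by
    have H := (mulc (mulc (mulc (mulc (mulc (hb) (hp)) (Ersts)) (Krsr)) (Ktts)) ((Prst).symm))
    have key : (φ ρ ρ σ * a) * ((φ σ τ σ) * (εσ * ετ * ερ) * (φ τ τ σ * φ ρ σ ρ) * (p * εσ * b) * (p) * (φ ρ σ τ)) = (p * εσ) * ((b) * (p) * (φ σ τ σ * φ ρ ρ σ * φ ρ σ τ) * (φ ρ σ ρ) * (φ τ τ σ * a) * (εσ * ετ * ερ)) := by ac_rfl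
    exact mul_right_cancel (key.trans (congrArg (HMul.hMul ((p * εσ))) H))
  have Kstt : φ σ τ τ = p * a := by
    have H := (mulc (mulc (mulc (mulc (mulc (mulc (mulc ((hετ).symm) ((hp).symm)) (Erstt)) ((Krrt).symm)) ((Prst).symm)) ((Zr).symm)) ((Zs).symm)) ((Zt).symm))
    have key : (φ σ τ τ * 1 * 1 * 1) * ((ετ) * (p) * (φ τ τ τ) * (φ ρ ρ τ * a) * (φ ρ σ τ) * (ερ * ερ) * (εσ * εσ) * (ετ * ετ)) = (p * a) * ((φ τ τ τ) * (εσ * ετ * ερ) * (φ σ τ τ * φ ρ ρ τ * φ ρ σ τ) * (ετ) * (εσ * ετ * ερ) * (1) * (1) * (1)) := by ac_rfl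
    have res := mul_right_cancel (key.trans (congrArg (HMul.hMul ((p * a))) H))
    simpa only [mul_one] using res
  have Ksrs : φ σ ρ σ * b = εσ := by
    have H := (mulc (mulc (mulc (mulc (mulc (mulc ((hp).symm) (Ersrs)) ((Krsr).symm)) (Prst)) ((Prts).symm)) (Ptrs)) ((Zs).symm))
    have key : (φ σ ρ σ * b * 1) * ((p) * (φ τ ρ σ * φ ρ σ τ) * (φ ρ σ ρ) * (εσ * ετ * ερ) * (φ ρ τ σ) * (εσ * ετ * ερ) * (εσ * εσ)) = (εσ) * ((εσ * ετ * ερ) * (φ σ ρ σ * φ ρ τ σ * φ ρ σ ρ) * (p * εσ * b) * (φ ρ σ τ) * (εσ * ετ * ερ) * (φ τ ρ σ) * (1)) := by ac_rfl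
    have res := mul_right_cancel (key.trans (congrArg (HMul.hMul ((εσ))) H))
    simpa only [mul_one] using res
  have Krtt : φ ρ τ τ = p * ετ * a := by
    have H := (mulc (mulc (mulc (mulc (mulc (mulc (mulc (mulc ((hp).symm) (Ersrt)) ((Krsr).symm)) (Krss)) (Ktrt)) ((Psrt).symm)) ((Zr).symm)) ((Zs).symm)) ((Zt).symm))
    have key : (φ ρ τ τ * 1 * 1 * 1) * ((p) * (φ τ ρ τ * φ ρ σ σ) * (φ ρ σ ρ) * (εσ * a) * (p * ετ * b) * (φ σ ρ τ) * (ερ * ερ) * (εσ * εσ) * (ετ * ετ)) = (p * ετ * a) * ((εσ * ετ * ερ) * (φ σ ρ τ * φ ρ τ τ * φ ρ σ ρ) * (p * εσ * b) * (φ ρ σ σ) * (φ τ ρ τ) * (εσ * ετ * ερ) * (1) * (1) * (1)) := by ac_rfl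
    have res := mul_right_cancel (key.trans (congrArg (HMul.hMul ((p * ετ * a))) H))
    simpa only [mul_one] using res
  refine ⟨?_, ?_, ?_, ?_, ?_, ?_, ?_, ?_, ?_, ?_, ?_, ?_, ?_, ?_, ?_, ?_⟩
  · exact Kstt
  · rw [eq_mul_inv_iff_mul_eq]; exact Ktts
  · rw [eq_inv_iff_mul_eq_one]; exact Ksst
  · exact Krss
  · exact Ksrr
  · rw [eq_mul_inv_iff_mul_eq]; exact Kssr
  · rw [eq_mul_inv_iff_mul_eq]; exact Krrs
  · exact Krtt
  · exact Ktrr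
  · rw [eq_mul_inv_iff_mul_eq]; exact Kttr
  · rw [eq_mul_inv_iff_mul_eq]; exact Krrt
  · exact Krsr
  · exact Ktrt
  · rw [eq_mul_inv_iff_mul_eq]; exact Ktst
  · rw [eq_mul_inv_iff_mul_eq]; exact Ksrs
  · rw [eq_mul_inv_iff_mul_eq]; exact Krtr
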